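/- For integers c, d and nonnegative integer k, the maximum degree in A of the Laurent polynomial sum_{i=0}^{k} binom(k,i) A^{c-2i} (-A^2 - A^{-2})^{d+i} is at most c + 2d - 4k. -/

import Mathlib

open LaurentPolynomial Finset

lemma mul_T_apply (f : LaurentPolynomial ℤ) (a n : ℤ) :
    (f * T a : LaurentPolynomial ℤ).coeff n = f.coeff (n - a) := by
  simpa [sub_eq_add_neg] using AddMonoidAlgebra.coeff_mul_single_apply (R := ℤ) (G := ℤ) f 1 a n

lemma C_mul_apply (r : ℤ) (f : LaurentPolynomial ℤ) (n : ℤ) :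
    (LaurentPolynomial.C r * f : LaurentPolynomial ℤ).coeff n = r * f.coeff n := by
  simpa using AddMonoidAlgebra.coeff_single_mul_apply (R := ℤ) (G := ℤ) f r 0 n

lemma delta_pow_apply (d : ℕ) : ∀ n : ℤ, 2 * (d : ℤ) < n →
    ((-T 2 - T (-2) : LaurentPolynomial ℤ) ^ d).coeff n = 0 := by
  induction d with
  | zero =>
    intro n hn
    rw [pow_zero, ← T_zero, T_apply]
    simp only [if_neg (by omega : (0:ℤ) ≠ n)]
  | succ d ih =>
    intro n hn
    have h1 : ((-T 2 - T (-2) : LaurentPolynomial ℤ) ^ (d+1))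
        = -((-T 2 - T (-2)) ^ d * T 2) - ((-T 2 - T (-2)) ^ d * T (-2)) := by
      rw [pow_succ]; ring
    rw [h1, AddMonoidAlgebra.coeff_sub, Finsupp.sub_apply, AddMonoidAlgebra.coeff_neg, Finsupp.neg_apply, mul_T_apply, mul_T_apply,
      ih _ (by push_cast at hn ⊢; omega), ih _ (by push_cast at hn ⊢; omega)]
    ring

/-- Lemma 3.1 (cancellation lemma): the Laurent polynomial
`∑_{i=0}^{k} C(k,i) A^{c-2i} (-A^2 - A^{-2})^{d+i}` has all coefficients of
powers above `A^{c+2d-4k}` equal to zero, i.e. its maximum degree in `A`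
is at most `c + 2d - 4k`. -/
theorem cancellation_lemma (c : ℤ) (d k : ℕ) (m : ℤ)
    (hm : c + 2 * (d : ℤ) - 4 * (k : ℤ) < m) :
    (∑ i ∈ Finset.range (k + 1),
        LaurentPolynomial.C ((k.choose i : ℤ)) * T (c - 2 * (i : ℤ)) *
          (-T 2 - T (-2)) ^ (d + i) : LaurentPolynomial ℤ).coeff m = 0 := by
  have key : (∑ i ∈ Finset.range (k + 1),
        LaurentPolynomial.C ((k.choose i : ℤ)) * T (c - 2 * (i : ℤ)) *
          (-T 2 - T (-2)) ^ (d + i) : LaurentPolynomial ℤ)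
      = LaurentPolynomial.C ((-1 : ℤ) ^ k) *
          ((-T 2 - T (-2)) ^ d * T (c - 4 * (k : ℤ))) := by
    have step : ∀ i ∈ Finset.range (k + 1),
        (LaurentPolynomial.C ((k.choose i : ℤ)) * T (c - 2 * (i : ℤ)) *
          (-T 2 - T (-2)) ^ (d + i) : LaurentPolynomial ℤ)
        = ((-T 2 - T (-2)) ^ d * T c) *
            ((T (-2) * (-T 2 - T (-2))) ^ i * 1 ^ (k - i) *
              ((k.choose i : ℕ) : LaurentPolynomial ℤ)) := by
      intro i _
      rw [mul_pow, T_pow, pow_add, ← map_natCast (LaurentPolynomial.C) (k.choose i)]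
      have hT : (T (c - 2 * (i:ℤ)) : LaurentPolynomial ℤ) = T c * T ((i:ℤ) * (-2)) := by
        rw [← T_add]; ring_nf
      rw [hT]
      ring
    rw [Finset.sum_congr rfl step, ← Finset.mul_sum, ← add_pow]
    have h1 : (T (-2) * (-T 2 - T (-2)) + 1 : LaurentPolynomial ℤ) = -T (-4) := by
      rw [mul_sub, mul_neg, ← T_add, ← T_add]
      norm_num
      ring
    rw [h1, neg_pow, T_pow, T_sub]
    have h2 : ((k:ℤ) * -4) = -(4 * (k:ℤ)) := by ring
    have h3 : ((-1 : LaurentPolynomial ℤ) ^ k) = LaurentPolynomial.C ((-1 : ℤ) ^ k) := by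
      rw [map_pow, map_neg, map_one]
    rw [h2, h3]
    ring
  rw [key, C_mul_apply, mul_T_apply, delta_pow_apply d _ (by omega), mul_zero]
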